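/- There exists an absolute constant C > 0 such that for every integer m ≥ 1 and every θ ∈ ℝ, Σ_{ℓ=0}^{2^m−1} ∏_{j=1}^{m−1} |cos(π 2^j (ℓ+θ)/2^m)| ≤ C·m, where the empty product (case m = 1) is interpreted as 1. -/

import Mathlib

open Finset

private lemma identA (n : ℕ) (t : ℝ) :
    |Real.sin (2 ^ (n + 1) * t)| =
      2 ^ n * |Real.sin (2 * t)| * ∏ j ∈ Finset.Ico 1 (n + 1), |Real.cos (2 ^ j * t)| := by
  induction n with
  | zero => simp
  | succ n ih =>
      have h2 : (2 : ℝ) ^ (n + 1 + 1) * t = 2 * (2 ^ (n + 1) * t) := by ring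
      rw [h2, Real.sin_two_mul, abs_mul, abs_mul, abs_two, ih,
        Finset.prod_Ico_succ_top (by omega : 1 ≤ n + 1)]
      ring

private lemma sin_lower (x : ℝ) : 2 * |x - round x| ≤ |Real.sin (Real.pi * x)| := by
  have hy : |x - (round x : ℝ)| ≤ 1 / 2 := abs_sub_round x
  set y := x - (round x : ℝ) with hy'
  have hpi := Real.pi_pos
  have hsx : Real.sin (Real.pi * x) = (-1) ^ (round x) * Real.sin (Real.pi * y) := by
    have hxy : Real.pi * x = Real.pi * y + (round x : ℤ) * Real.pi := by
      rw [hy']; push_cast; ring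
    rw [hxy, Real.sin_add_int_mul_pi]
  have habs1 : |((-1 : ℝ)) ^ (round x)| = 1 := by
    rcases Int.even_or_odd (round x) with h | h
    · rw [h.neg_one_zpow]; simp
    · rw [h.neg_one_zpow]; simp
  rw [hsx, abs_mul, habs1, one_mul]
  have habs : |Real.sin (Real.pi * y)| = Real.sin (Real.pi * |y|) := by
    rcases abs_cases y with ⟨h1, h2⟩ | ⟨h1, h2⟩
    · rw [h1]
      exact abs_of_nonneg (Real.sin_nonneg_of_nonneg_of_le_pi (by positivity)
        (by nlinarith))
    · rw [h1, mul_neg, Real.sin_neg]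
      rw [abs_of_neg h2] at hy
      exact abs_of_nonpos (Real.sin_nonpos_of_nonpos_of_neg_pi_le (by nlinarith [h2.le])
        (by nlinarith))
  rw [habs]
  have h1 : |y| ≤ 1 / 2 := hy
  have := Real.mul_le_sin (x := Real.pi * |y|) (by positivity) (by nlinarith)
  calc 2 * |y| = 2 / Real.pi * (Real.pi * |y|) := by field_simp
  _ ≤ _ := this

private lemma harm (k : ℕ) : ∑ r ∈ Finset.Ico (1 : ℕ) (2 ^ k), (1 : ℝ) / (r : ℝ) ≤ k + 1 := by
  induction k with
  | zero => simp
  | succ k ih =>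
      have h1 : (1 : ℕ) ≤ 2 ^ k := Nat.one_le_two_pow
      have h2 : (2 : ℕ) ^ k ≤ 2 ^ (k + 1) := Nat.pow_le_pow_right (by norm_num) (by omega)
      rw [← Finset.sum_Ico_consecutive (fun r : ℕ => (1 : ℝ) / (r : ℝ)) h1 h2]
      have hb : ∑ r ∈ Finset.Ico ((2 : ℕ) ^ k) (2 ^ (k + 1)), (1 : ℝ) / (r : ℝ) ≤ 1 := by
        have hle : ∀ r ∈ Finset.Ico ((2 : ℕ) ^ k) (2 ^ (k + 1)),
            (1 : ℝ) / (r : ℝ) ≤ 1 / (2 ^ k : ℝ) := by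
          intro r hr
          simp only [Finset.mem_Ico] at hr
          exact one_div_le_one_div_of_le (by positivity) (by exact_mod_cast hr.1)
        calc ∑ r ∈ Finset.Ico ((2 : ℕ) ^ k) (2 ^ (k + 1)), (1 : ℝ) / (r : ℝ)
            ≤ (Finset.Ico ((2 : ℕ) ^ k) (2 ^ (k + 1))).card • ((1 : ℝ) / (2 ^ k : ℝ)) :=
              Finset.sum_le_card_nsmul _ _ _ hle
          _ = 1 := by
              rw [Nat.card_Ico, nsmul_eq_mul]
              have hcard : (2 : ℕ) ^ (k + 1) - 2 ^ k = 2 ^ k := by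
                rw [pow_succ]; omega
              rw [hcard]
              push_cast
              field_simp
      push_cast
      linarith

/-- the dominating function -/
private noncomputable def hfun (r : ℕ) : ℝ := if r = 0 then 1 else 1 / (2 * r)

private lemma hfun_nonneg (r : ℕ) : 0 ≤ hfun r := by
  unfold hfun; split <;> positivity

private lemma hfun_of_ne {r : ℕ} (h : r ≠ 0) : hfun r = 1 / (2 * r) := by
  unfold hfun; simp [h]

set_option maxHeartbeats 1000000 in
private lemma term_bound (n : ℕ) (θ : ℝ) (ℓ : ℕ) (r : ℕ) (hr : r < 2 ^ n)
    (hcong : ∃ k : ℤ, (ℓ : ℤ) + ⌊θ⌋ = r + 2 ^ n * k) :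
    ∏ j ∈ Finset.Ico 1 (n + 1), |Real.cos (Real.pi * 2 ^ j * ((ℓ : ℝ) + θ) / 2 ^ (n + 1))|
      ≤ hfun r + hfun (2 ^ n - 1 - r) := by
  set P := ∏ j ∈ Finset.Ico 1 (n + 1),
    |Real.cos (Real.pi * 2 ^ j * ((ℓ : ℝ) + θ) / 2 ^ (n + 1))| with hP
  have hPnonneg : 0 ≤ P := Finset.prod_nonneg fun j _ => abs_nonneg _
  have hP1 : P ≤ 1 :=
    Finset.prod_le_one (fun j _ => abs_nonneg _) (fun j _ => Real.abs_cos_le_one _)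
  by_cases hr0 : r = 0
  · have h0 : hfun r = 1 := by rw [hr0]; rfl
    nlinarith [hfun_nonneg (2 ^ n - 1 - r)]
  by_cases hrM : r = 2 ^ n - 1
  · have h0 : 2 ^ n - 1 - r = 0 := by omega
    rw [h0]
    have h1 : hfun 0 = 1 := rfl
    nlinarith [hfun_nonneg r]
  -- main case: 1 ≤ r ≤ 2^n - 2
  obtain ⟨k, hk⟩ := hcong
  have h2n : (0 : ℝ) < 2 ^ n := by positivity
  set t := Real.pi * ((ℓ : ℝ) + θ) / 2 ^ (n + 1) with ht
  have hident : |Real.sin (2 ^ (n + 1) * t)| = 2 ^ n * |Real.sin (2 * t)| * P := by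
    rw [identA n t, hP]
    congr 1
    apply Finset.prod_congr rfl
    intro j _
    congr 1
    rw [ht]; ring
  set x := ((ℓ : ℝ) + θ) / 2 ^ n with hx
  have h2t : 2 * t = Real.pi * x := by
    rw [ht, hx, pow_succ]; field_simp
  set u := Int.fract θ with hu
  have hu0 : 0 ≤ u := Int.fract_nonneg θ
  have hu1 : u < 1 := Int.fract_lt_one θ
  set y := ((r : ℝ) + u) / 2 ^ n with hy
  have hkey : ((r : ℝ) + u) + 2 ^ n * (k : ℝ) = (ℓ : ℝ) + θ := by
    have hθ : θ = (⌊θ⌋ : ℝ) + u := by rw [hu]; exact (Int.floor_add_fract θ).symm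
    have hℓ : ((ℓ : ℝ) + (⌊θ⌋ : ℝ)) = (r : ℝ) + 2 ^ n * (k : ℝ) := by
      exact_mod_cast congrArg (fun z : ℤ => (z : ℝ)) hk
    rw [hθ]; linarith
  have hxy : x = y + (k : ℤ) := by
    rw [hx, ← hkey, hy, add_div, mul_comm ((2 : ℝ) ^ n) (k : ℝ), mul_div_assoc,
      div_self (ne_of_gt h2n), mul_one]
  have hy0 : 0 ≤ y := by positivity
  have hy1 : y < 1 := by
    rw [hy, div_lt_one h2n]
    have : (r : ℝ) + 1 ≤ 2 ^ n := by exact_mod_cast hr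
    linarith
  -- distance to integers
  have hxr : x - (round x : ℝ) = y - (round y : ℝ) := by
    rw [hxy, round_add_intCast]; push_cast; ring
  have hdist : |x - (round x : ℝ)| = min y (1 - y) := by
    rw [hxr, abs_sub_round_eq_min, Int.fract_eq_self.mpr ⟨hy0, hy1⟩]
  -- lower bound on min y (1-y)
  set c := min r (2 ^ n - 1 - r) with hc
  have hc1 : 1 ≤ c := by
    have := Nat.one_le_two_pow (n := n)
    omega
  have hscast : ((2 ^ n - 1 - r : ℕ) : ℝ) = 2 ^ n - 1 - (r : ℝ) := by
    have hs : r + (2 ^ n - 1 - r) + 1 = 2 ^ n := by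
      have := Nat.one_le_two_pow (n := n)
      omega
    have : (r : ℝ) + ((2 ^ n - 1 - r : ℕ) : ℝ) + 1 = 2 ^ n := by exact_mod_cast hs
    linarith
  have hymul : y * 2 ^ n = (r : ℝ) + u := by rw [hy]; field_simp
  have hpow := Nat.one_le_two_pow (n := n)
  have hclow : (c : ℝ) / 2 ^ n ≤ min y (1 - y) := by
    have hcr : (c : ℝ) ≤ (r : ℝ) := by exact_mod_cast min_le_left r (2 ^ n - 1 - r)
    have hcs : (c : ℝ) ≤ 2 ^ n - 1 - (r : ℝ) := by
      rw [← hscast]; exact_mod_cast min_le_right r (2 ^ n - 1 - r)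
    rw [le_min_iff]
    constructor
    · rw [div_le_iff₀ h2n]; nlinarith
    · rw [div_le_iff₀ h2n]; nlinarith
  have hsin2t : 2 * ((c : ℝ) / 2 ^ n) ≤ |Real.sin (2 * t)| := by
    calc 2 * ((c : ℝ) / 2 ^ n) ≤ 2 * min y (1 - y) := by linarith
    _ = 2 * |x - (round x : ℝ)| := by rw [hdist]
    _ ≤ |Real.sin (Real.pi * x)| := sin_lower x
    _ = |Real.sin (2 * t)| := by rw [h2t]
  have hone : 2 ^ n * |Real.sin (2 * t)| * P ≤ 1 := by
    rw [← hident]; exact Real.abs_sin_le_one _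
  have hcpos : (0 : ℝ) < (c : ℝ) := by exact_mod_cast hc1
  have hcP : P ≤ 1 / (2 * (c : ℝ)) := by
    rw [le_div_iff₀ (by positivity), mul_comm]
    have hstep : 2 ^ n * (2 * ((c : ℝ) / 2 ^ n)) * P ≤ 2 ^ n * |Real.sin (2 * t)| * P :=
      mul_le_mul_of_nonneg_right (mul_le_mul_of_nonneg_left hsin2t (le_of_lt h2n)) hPnonneg
    have heq : 2 ^ n * (2 * ((c : ℝ) / 2 ^ n)) = 2 * (c : ℝ) := by field_simp
    rw [heq] at hstep
    linarith
  have hcases : (c : ℝ) = (r : ℝ) ∨ (c : ℝ) = ((2 ^ n - 1 - r : ℕ) : ℝ) := by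
    rcases min_choice r (2 ^ n - 1 - r) with h | h
    · left; exact_mod_cast congrArg (Nat.cast : ℕ → ℝ) h
    · right; exact_mod_cast congrArg (Nat.cast : ℕ → ℝ) h
  have hr2 : 0 < ((2 ^ n - 1 - r : ℕ) : ℝ) := by
    have : (0 : ℕ) < 2 ^ n - 1 - r := by omega
    exact_mod_cast this
  have hrpos : 0 < (r : ℝ) := by exact_mod_cast Nat.pos_of_ne_zero hr0
  rw [hfun_of_ne hr0, hfun_of_ne (show 2 ^ n - 1 - r ≠ 0 by omega)]
  rcases hcases with h | h
  · rw [h] at hcP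
    have hnn : (0 : ℝ) ≤ 1 / (2 * ((2 ^ n - 1 - r : ℕ) : ℝ)) := le_of_lt (div_pos one_pos (by linarith))
    linarith
  · rw [h] at hcP
    have hnn : (0 : ℝ) ≤ 1 / (2 * (r : ℝ)) := le_of_lt (div_pos one_pos (by linarith))
    linarith

private lemma inj_sum_le (M : ℕ) (s : Finset ℕ) (g : ℕ → ℕ)
    (hinj : ∀ a ∈ s, ∀ b ∈ s, g a = g b → a = b)
    (hmem : ∀ a ∈ s, g a < M) :
    ∑ ℓ ∈ s, hfun (g ℓ) ≤ ∑ r ∈ Finset.range M, hfun r := by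
  rw [← Finset.sum_image (f := hfun) (g := g) hinj]
  apply Finset.sum_le_sum_of_subset_of_nonneg
  · intro x hx
    simp only [Finset.mem_image] at hx
    obtain ⟨a, ha, rfl⟩ := hx
    exact Finset.mem_range.mpr (hmem a ha)
  · intro i _ _
    exact hfun_nonneg i

private lemma window (n : ℕ) (θ : ℝ) (b : ℕ) :
    ∑ ℓ ∈ Finset.Ico b (b + 2 ^ n),
        ∏ j ∈ Finset.Ico 1 (n + 1),
          |Real.cos (Real.pi * 2 ^ j * ((ℓ : ℝ) + θ) / 2 ^ (n + 1))|
      ≤ 2 * ∑ r ∈ Finset.range (2 ^ n), hfun r := by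
  have hM0 : (0 : ℤ) < ((2 ^ n : ℕ) : ℤ) := by positivity
  set f : ℕ → ℕ := fun ℓ => ((((ℓ : ℤ) + ⌊θ⌋) % ((2 ^ n : ℕ) : ℤ)).toNat) with hf
  have hnn : ∀ ℓ : ℕ, 0 ≤ ((ℓ : ℤ) + ⌊θ⌋) % ((2 ^ n : ℕ) : ℤ) :=
    fun ℓ => Int.emod_nonneg _ (by positivity)
  have hflt : ∀ ℓ, f ℓ < 2 ^ n := by
    intro ℓ
    have h1 : ((ℓ : ℤ) + ⌊θ⌋) % ((2 ^ n : ℕ) : ℤ) < ((2 ^ n : ℕ) : ℤ) :=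
      Int.emod_lt_of_pos _ hM0
    have h2 := hnn ℓ
    show ((((ℓ : ℤ) + ⌊θ⌋) % ((2 ^ n : ℕ) : ℤ)).toNat) < 2 ^ n
    omega
  have hfc : ∀ ℓ : ℕ, ∃ k : ℤ, (ℓ : ℤ) + ⌊θ⌋ = (f ℓ : ℤ) + ((2 : ℤ) ^ n) * k := by
    intro ℓ
    refine ⟨((ℓ : ℤ) + ⌊θ⌋) / ((2 ^ n : ℕ) : ℤ), ?_⟩
    rw [hf]
    simp only []
    rw [Int.toNat_of_nonneg (hnn ℓ), Int.emod_def]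
    push_cast
    ring
  have hfinj : ∀ a ∈ Finset.Ico b (b + 2 ^ n), ∀ c ∈ Finset.Ico b (b + 2 ^ n),
      f a = f c → a = c := by
    intro a ha c hc hfe
    simp only [Finset.mem_Ico] at ha hc
    have hemod : ((a : ℤ) + ⌊θ⌋) % ((2 ^ n : ℕ) : ℤ) = ((c : ℤ) + ⌊θ⌋) % ((2 ^ n : ℕ) : ℤ) := by
      have := congrArg (Nat.cast : ℕ → ℤ) hfe
      rw [hf] at this
      simp only [] at this
      rwa [Int.toNat_of_nonneg (hnn a), Int.toNat_of_nonneg (hnn c)] at this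
    have hdvd : ((2 ^ n : ℕ) : ℤ) ∣ (((a : ℤ) + ⌊θ⌋) - ((c : ℤ) + ⌊θ⌋)) :=
      Int.dvd_of_emod_eq_zero (Int.emod_eq_emod_iff_emod_sub_eq_zero.mp hemod)
    have heq2 : ((a : ℤ) + ⌊θ⌋) - ((c : ℤ) + ⌊θ⌋) = (a : ℤ) - c := by ring
    rw [heq2] at hdvd
    have habs : |(a : ℤ) - c| < ((2 ^ n : ℕ) : ℤ) := by
      rw [abs_lt]
      omega
    have := Int.eq_zero_of_abs_lt_dvd hdvd habs
    omega
  have hstep : ∀ ℓ ∈ Finset.Ico b (b + 2 ^ n),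
      ∏ j ∈ Finset.Ico 1 (n + 1),
          |Real.cos (Real.pi * 2 ^ j * ((ℓ : ℝ) + θ) / 2 ^ (n + 1))|
        ≤ hfun (f ℓ) + hfun (2 ^ n - 1 - f ℓ) :=
    fun ℓ _ => term_bound n θ ℓ (f ℓ) (hflt ℓ) (hfc ℓ)
  have hpow := Nat.one_le_two_pow (n := n)
  calc ∑ ℓ ∈ Finset.Ico b (b + 2 ^ n),
        ∏ j ∈ Finset.Ico 1 (n + 1),
          |Real.cos (Real.pi * 2 ^ j * ((ℓ : ℝ) + θ) / 2 ^ (n + 1))|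
      ≤ ∑ ℓ ∈ Finset.Ico b (b + 2 ^ n), (hfun (f ℓ) + hfun (2 ^ n - 1 - f ℓ)) :=
        Finset.sum_le_sum hstep
    _ = (∑ ℓ ∈ Finset.Ico b (b + 2 ^ n), hfun (f ℓ))
        + ∑ ℓ ∈ Finset.Ico b (b + 2 ^ n), hfun (2 ^ n - 1 - f ℓ) :=
        Finset.sum_add_distrib
    _ ≤ (∑ r ∈ Finset.range (2 ^ n), hfun r) + ∑ r ∈ Finset.range (2 ^ n), hfun r := by
        apply add_le_add
        · exact inj_sum_le _ _ _ hfinj (fun a _ => hflt a)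
        · apply inj_sum_le _ _ (fun ℓ => 2 ^ n - 1 - f ℓ)
          · intro a ha c hc h
            have h1 := hflt a
            have h2 := hflt c
            exact hfinj a ha c hc (by omega)
          · intro a _
            have := hflt a
            omega
    _ = 2 * ∑ r ∈ Finset.range (2 ^ n), hfun r := by ring

theorem sum_prod_cos_shift_bound :
    ∃ C : ℝ, 0 < C ∧ ∀ (m : ℕ), 1 ≤ m → ∀ θ : ℝ,
      ∑ l ∈ Finset.range (2 ^ m),
          ∏ j ∈ Finset.Ico 1 m, |Real.cos (Real.pi * 2 ^ j * ((l : ℝ) + θ) / 2 ^ m)|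
        ≤ C * m := by
  refine ⟨6, by norm_num, ?_⟩
  intro m hm θ
  obtain ⟨n, rfl⟩ : ∃ n, m = n + 1 := ⟨m - 1, by omega⟩
  have hpow := Nat.one_le_two_pow (n := n)
  have hsplit : (2 : ℕ) ^ (n + 1) = 2 ^ n + 2 ^ n := by rw [pow_succ]; omega
  rw [hsplit, Finset.range_eq_Ico,
    ← Finset.sum_Ico_consecutive _ (Nat.zero_le (2 ^ n)) (Nat.le_add_right (2 ^ n) (2 ^ n))]
  have w1 := window n θ 0
  rw [Nat.zero_add] at w1
  have w2 := window n θ (2 ^ n)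
  have hsum : ∑ r ∈ Finset.range (2 ^ n), hfun r ≤ 1 + ((n : ℝ) + 1) / 2 := by
    rw [Finset.range_eq_Ico,
      ← Finset.sum_Ico_consecutive _ (Nat.zero_le 1) (by omega : (1 : ℕ) ≤ 2 ^ n)]
    have h0 : ∑ r ∈ Finset.Ico 0 1, hfun r = 1 := by
      rw [← Finset.range_eq_Ico, Finset.sum_range_one]
      simp [hfun]
    have h1 : ∑ r ∈ Finset.Ico 1 (2 ^ n), hfun r
        = (∑ r ∈ Finset.Ico (1 : ℕ) (2 ^ n), (1 : ℝ) / (r : ℝ)) / 2 := by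
      rw [Finset.sum_div]
      apply Finset.sum_congr rfl
      intro r hr
      simp only [Finset.mem_Ico] at hr
      rw [hfun_of_ne (by omega)]
      ring
    rw [h0, h1]
    have := harm n
    linarith
  push_cast
  linarith
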